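/- Fix an index i with 1 ≤ i ≤ k, and suppose the integer matrices (d_{lj}) (1 ≤ l ≤ s, 1 ≤ j ≤ k) and (m_{jt}) (k+1 ≤ j ≤ r, 1 ≤ t ≤ k) satisfy ∑_{l=1}^s d_{li} d_{lv} − ∑_{u=k+1}^r m_{ui} m_{uv} = 0 for all v ≠ i, and ∑_{l=1}^s d_{li}² − ∑_{u=k+1}^r m_{ui}² − 1 = 0. Then the meromorphic function F(q₁,…,q_k) = ∏_{l=1}^s θ(∑_j d_{lj} q_j, τ) / (∏_{i'=1}^k θ(q_{i'}, τ) · ∏_{j=k+1}^r θ(∑_t m_{jt} q_t, τ)) satisfies F(q₁,…,q_i + 1,…,q_k) = F(q₁,…,q_k) and F(q₁,…,q_i + τ,…,q_k) = F(q₁,…,q_k), wherever both sides are defined (i.e., where the denominator is nonzero). -/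

import Mathlib

noncomputable section

/-- `πC` is the real number `π` viewed as a complex number. -/
def πC : ℂ := Real.pi

/-- The nome `q = e^{2πiτ}`. -/
def nome (τ : ℂ) : ℂ := Complex.exp (2 * πC * Complex.I * τ)

/-- The Jacobi theta function
`θ(v,τ) = 2 q^{1/8} sin(πv) ∏_{j=1}^∞ (1−q^j)(1−e^{2πiv}q^j)(1−e^{−2πiv}q^j)`,
where `q^{1/8} = e^{πiτ/4}`. -/
def jacobiθ (τ v : ℂ) : ℂ :=
  2 * Complex.exp (πC * Complex.I * τ / 4) * Complex.sin (πC * v) *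
    ∏' j : ℕ,
      ((1 - nome τ ^ (j + 1)) *
       (1 - Complex.exp (2 * πC * Complex.I * v) * nome τ ^ (j + 1)) *
       (1 - Complex.exp (-(2 * πC * Complex.I * v)) * nome τ ^ (j + 1)))

namespace WittenAux

open Complex Filter

lemma norm_nome_lt_one {τ : ℂ} (hτ : 0 < τ.im) : ‖nome τ‖ < 1 := by
  unfold nome
  rw [Complex.norm_exp]
  have h : (2 * πC * Complex.I * τ).re = -(2 * Real.pi * τ.im) := by
    simp [πC, Complex.mul_re, Complex.mul_im]
  rw [h]
  apply Real.exp_lt_one_iff.mpr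
  have := Real.pi_pos
  nlinarith

lemma nome_ne_zero (τ : ℂ) : nome τ ≠ 0 := Complex.exp_ne_zero _

lemma multipliable_g (a w : ℂ) (hw : ‖w‖ < 1) :
    Multipliable (fun j : ℕ => 1 - a * w ^ (j + 1)) := by
  by_cases hz : ∃ j : ℕ, 1 - a * w ^ (j + 1) = 0
  · obtain ⟨j0, hj0⟩ := hz
    refine ⟨0, ?_⟩
    have hev : ∀ᶠ s : Finset ℕ in atTop, ∏ j ∈ s, (1 - a * w ^ (j + 1)) = 0 := by
      filter_upwards [Filter.eventually_ge_atTop ({j0} : Finset ℕ)] with s hs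
      exact Finset.prod_eq_zero (hs (Finset.mem_singleton_self j0)) hj0
    exact Tendsto.congr' (by filter_upwards [hev] with s hs; exact hs.symm) tendsto_const_nhds
  · push_neg at hz
    refine Complex.multipliable_of_summable_log (f := fun j => 1 - a * w ^ (j + 1)) ?_
    have hsum : Summable (fun j : ℕ => 3 / 2 * (‖a‖ * ‖w‖ ^ (j + 1))) := by
      apply Summable.mul_left
      apply Summable.mul_left
      exact (summable_geometric_of_lt_one (norm_nonneg w) hw).comp_injective
        (add_left_injective 1) |>.congr (fun j => rfl)
    apply Summable.of_norm_bounded_eventually_nat hsum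
    have htend : Tendsto (fun j : ℕ => ‖a‖ * ‖w‖ ^ (j + 1)) atTop (nhds 0) := by
      have h0 : Tendsto (fun j : ℕ => ‖w‖ ^ (j + 1)) atTop (nhds 0) :=
        (tendsto_pow_atTop_nhds_zero_of_lt_one (norm_nonneg w) hw).comp
          (tendsto_add_atTop_nat 1)
      simpa using h0.const_mul ‖a‖
    have hev2 : ∀ᶠ j : ℕ in atTop, ‖a‖ * ‖w‖ ^ (j + 1) ≤ 1 / 2 :=
      htend.eventually_le_const (by norm_num)
    filter_upwards [hev2] with j hj
    have hn : ‖-(a * w ^ (j + 1))‖ ≤ 1 / 2 := by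
      rw [norm_neg, norm_mul, norm_pow]
      exact hj
    calc ‖Complex.log (1 - a * w ^ (j + 1))‖
        = ‖Complex.log (1 + -(a * w ^ (j + 1)))‖ := by rw [sub_eq_add_neg]
      _ ≤ 3 / 2 * ‖-(a * w ^ (j + 1))‖ := Complex.norm_log_one_add_half_le_self hn
      _ = 3 / 2 * (‖a‖ * ‖w‖ ^ (j + 1)) := by rw [norm_neg, norm_mul, norm_pow]

/-- partial products notation -/
def P (τ a : ℂ) : ℂ := ∏' j : ℕ, (1 - a * nome τ ^ (j + 1))

lemma tprod3 {τ : ℂ} (hτ : 0 < τ.im) (b c : ℂ) :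
    (∏' j : ℕ, ((1 - nome τ ^ (j + 1)) * (1 - b * nome τ ^ (j + 1)) *
      (1 - c * nome τ ^ (j + 1)))) = P τ 1 * P τ b * P τ c := by
  have hq := norm_nome_lt_one hτ
  have m1 : Multipliable (fun j : ℕ => 1 - nome τ ^ (j + 1)) :=
    (multipliable_g 1 (nome τ) hq).congr (fun j => by rw [one_mul])
  have m2 := multipliable_g b (nome τ) hq
  have m3 := multipliable_g c (nome τ) hq
  have h1 : (∏' j : ℕ, ((1 - nome τ ^ (j + 1)) * (1 - b * nome τ ^ (j + 1)) *
      (1 - c * nome τ ^ (j + 1)))) =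
      (∏' j : ℕ, ((1 - nome τ ^ (j + 1)) * (1 - b * nome τ ^ (j + 1)))) *
        ∏' j : ℕ, (1 - c * nome τ ^ (j + 1)) := (m1.mul m2).tprod_mul m3
  have h2 : (∏' j : ℕ, ((1 - nome τ ^ (j + 1)) * (1 - b * nome τ ^ (j + 1)))) =
      (∏' j : ℕ, (1 - nome τ ^ (j + 1))) * ∏' j : ℕ, (1 - b * nome τ ^ (j + 1)) :=
    m1.tprod_mul m2
  have h0 : P τ 1 = ∏' j : ℕ, (1 - nome τ ^ (j + 1)) :=
    tprod_congr (fun j => by rw [one_mul])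
  rw [h1, h2, h0]
  rfl

lemma theta_eq {τ : ℂ} (hτ : 0 < τ.im) (v : ℂ) :
    jacobiθ τ v = 2 * Complex.exp (πC * Complex.I * τ / 4) * Complex.sin (πC * v) *
      (P τ 1 * P τ (Complex.exp (2 * πC * Complex.I * v)) *
        P τ (Complex.exp (-(2 * πC * Complex.I * v)))) := by
  unfold jacobiθ
  rw [tprod3 hτ]

lemma P_shift {τ : ℂ} (hτ : 0 < τ.im) (a : ℂ) :
    P τ a = (1 - a * nome τ) * P τ (a * nome τ) := by
  have hm : Multipliable (fun n : ℕ => 1 - a * nome τ ^ (n + 1 + 1)) :=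
    (multipliable_g (a * nome τ) (nome τ) (norm_nome_lt_one hτ)).congr (fun n => by ring_nf)
  have h := tprod_eq_zero_mul' (f := fun b : ℕ => 1 - a * nome τ ^ (b + 1)) hm
  unfold P
  rw [h]
  congr 1
  · norm_num
  · exact tprod_congr (fun j => by ring_nf)

lemma theta_add_one (τ v : ℂ) : jacobiθ τ (v + 1) = -jacobiθ τ v := by
  unfold jacobiθ
  have hπ : Complex.exp (2 * πC * Complex.I) = 1 := by
    rw [show 2 * πC * Complex.I = 2 * (Real.pi : ℂ) * Complex.I by rw [πC]]
    exact Complex.exp_two_pi_mul_I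
  have h1 : Complex.sin (πC * (v + 1)) = -Complex.sin (πC * v) := by
    rw [mul_add, mul_one, show (πC : ℂ) = ((Real.pi : ℝ) : ℂ) from rfl, Complex.sin_add,
      ← Complex.ofReal_sin, ← Complex.ofReal_cos, Real.sin_pi, Real.cos_pi]
    push_cast
    ring
  have h2 : Complex.exp (2 * πC * Complex.I * (v + 1)) = Complex.exp (2 * πC * Complex.I * v) := by
    rw [mul_add, mul_one, Complex.exp_add, hπ, mul_one]
  have h3 : Complex.exp (-(2 * πC * Complex.I * (v + 1))) =
      Complex.exp (-(2 * πC * Complex.I * v)) := by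
    rw [show -(2 * πC * Complex.I * (v + 1)) = -(2 * πC * Complex.I * v) + -(2 * πC * Complex.I)
      by ring, Complex.exp_add, show Complex.exp (-(2 * πC * Complex.I)) = 1 by
        rw [Complex.exp_neg, hπ, inv_one], mul_one]
  rw [h1, h2, h3]
  ring

lemma sin_shift_identity (τ v : ℂ) :
    Complex.sin (πC * (v + τ)) * (1 - (Complex.exp (2 * πC * Complex.I * v))⁻¹) =
      -Complex.exp (-(πC * Complex.I * τ) - 2 * πC * Complex.I * v) * Complex.sin (πC * v) *
        (1 - Complex.exp (2 * πC * Complex.I * v) * nome τ) := by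
  set x := Complex.exp (πC * Complex.I * v) with hx
  set p := Complex.exp (πC * Complex.I * τ) with hp
  have hxn : x ≠ 0 := Complex.exp_ne_zero _
  have hpn : p ≠ 0 := Complex.exp_ne_zero _
  have e1 : Complex.sin (πC * v) = (x⁻¹ - x) * Complex.I / 2 := by
    rw [show Complex.sin (πC * v) =
      (Complex.exp (-(πC * v) * Complex.I) - Complex.exp (πC * v * Complex.I)) * Complex.I / 2
      from rfl, show -(πC * v) * Complex.I = -(πC * Complex.I * v) by ring,
      show πC * v * Complex.I = πC * Complex.I * v by ring, Complex.exp_neg]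
  have e2 : Complex.sin (πC * (v + τ)) = ((x * p)⁻¹ - x * p) * Complex.I / 2 := by
    rw [show Complex.sin (πC * (v + τ)) =
      (Complex.exp (-(πC * (v + τ)) * Complex.I) - Complex.exp (πC * (v + τ) * Complex.I)) *
        Complex.I / 2 from rfl,
      show -(πC * (v + τ)) * Complex.I = -(πC * Complex.I * v + πC * Complex.I * τ) by ring,
      show πC * (v + τ) * Complex.I = πC * Complex.I * v + πC * Complex.I * τ by ring,
      Complex.exp_neg, Complex.exp_add]
  have e3 : Complex.exp (2 * πC * Complex.I * v) = x * x := by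
    rw [hx, ← Complex.exp_add]
    congr 1
    ring
  have e4 : nome τ = p * p := by
    rw [hp, nome, ← Complex.exp_add]
    congr 1
    ring
  have e5 : Complex.exp (-(πC * Complex.I * τ) - 2 * πC * Complex.I * v) = p⁻¹ * (x * x)⁻¹ := by
    rw [show -(πC * Complex.I * τ) - 2 * πC * Complex.I * v =
      -(πC * Complex.I * τ + (πC * Complex.I * v + πC * Complex.I * v)) by ring,
      Complex.exp_neg, Complex.exp_add, Complex.exp_add, mul_inv]
  rw [e1, e2, e3, e4, e5]
  have hI : (Complex.I : ℂ) ≠ 0 := Complex.I_ne_zero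
  field_simp
  ring

lemma theta_add_tau {τ : ℂ} (hτ : 0 < τ.im) (v : ℂ) :
    jacobiθ τ (v + τ) =
      -Complex.exp (-(πC * Complex.I * τ) - 2 * πC * Complex.I * v) * jacobiθ τ v := by
  have hq := nome_ne_zero τ
  set y := Complex.exp (2 * πC * Complex.I * v) with hy
  have hyn : y ≠ 0 := Complex.exp_ne_zero _
  have e1 : Complex.exp (2 * πC * Complex.I * (v + τ)) = y * nome τ := by
    rw [hy, nome, ← Complex.exp_add]
    congr 1
    ring
  have e2 : Complex.exp (-(2 * πC * Complex.I * (v + τ))) = y⁻¹ * (nome τ)⁻¹ := by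
    rw [show -(2 * πC * Complex.I * (v + τ)) =
      -(2 * πC * Complex.I * v + 2 * πC * Complex.I * τ) by ring, Complex.exp_neg,
      Complex.exp_add, mul_inv, hy, nome]
  have e3 : Complex.exp (-(2 * πC * Complex.I * v)) = y⁻¹ := by
    rw [Complex.exp_neg, hy]
  rw [theta_eq hτ (v + τ), theta_eq hτ v, e1, e2, e3]
  have k1 : P τ y = (1 - y * nome τ) * P τ (y * nome τ) := P_shift hτ y
  have k2 : P τ (y⁻¹ * (nome τ)⁻¹) = (1 - y⁻¹) * P τ y⁻¹ := by
    have h5 := P_shift hτ (y⁻¹ * (nome τ)⁻¹)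
    have h4 : y⁻¹ * (nome τ)⁻¹ * nome τ = y⁻¹ := by
      rw [mul_assoc, inv_mul_cancel₀ hq, mul_one]
    rwa [h4] at h5
  have hs := sin_shift_identity τ v
  rw [← hy] at hs
  rw [k1, k2]
  linear_combination (2 * Complex.exp (πC * Complex.I * τ / 4) * P τ 1 * P τ (y * nome τ) *
    P τ y⁻¹) * hs

lemma theta_sub_one (τ v : ℂ) : jacobiθ τ (v - 1) = -jacobiθ τ v := by
  have h := theta_add_one τ (v - 1)
  rw [sub_add_cancel] at h
  linear_combination h

lemma theta_sub_tau {τ : ℂ} (hτ : 0 < τ.im) (v : ℂ) :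
    jacobiθ τ (v - τ) =
      -Complex.exp (-(πC * Complex.I * τ) + 2 * πC * Complex.I * v) * jacobiθ τ v := by
  have h := theta_add_tau hτ (v - τ)
  rw [sub_add_cancel] at h
  have hE : Complex.exp (-(πC * Complex.I * τ) - 2 * πC * Complex.I * (v - τ)) *
      Complex.exp (-(πC * Complex.I * τ) + 2 * πC * Complex.I * v) = 1 := by
    rw [← Complex.exp_add, show -(πC * Complex.I * τ) - 2 * πC * Complex.I * (v - τ) +
      (-(πC * Complex.I * τ) + 2 * πC * Complex.I * v) = 0 by ring, Complex.exp_zero]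
  linear_combination Complex.exp (-(πC * Complex.I * τ) + 2 * πC * Complex.I * v) * h -
    jacobiθ τ (v - τ) * hE

lemma theta_int (τ : ℂ) (n : ℤ) (v : ℂ) :
    jacobiθ τ (v + n) = (-1 : ℂ) ^ n * jacobiθ τ v := by
  induction n using Int.induction_on with
  | zero => simp
  | succ n ih =>
    have hv : v + ((n : ℤ) + 1 : ℤ) = (v + (n : ℤ)) + 1 := by push_cast; ring
    rw [hv, theta_add_one, ih, zpow_add₀ (by norm_num : (-1 : ℂ) ≠ 0), zpow_one]
    ring
  | pred n ih =>
    set N : ℤ := -(n : ℤ) with hN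
    have hv : v + ((N - 1 : ℤ) : ℂ) = (v + ((N : ℤ) : ℂ)) - 1 := by push_cast; ring
    rw [hv, theta_sub_one, ih, show (N - 1 : ℤ) = N + (-1) by ring,
      zpow_add₀ (by norm_num : (-1 : ℂ) ≠ 0), zpow_neg_one]
    ring

lemma theta_tau_int {τ : ℂ} (hτ : 0 < τ.im) (n : ℤ) (v : ℂ) :
    jacobiθ τ (v + n * τ) = (-1 : ℂ) ^ n *
      Complex.exp (-(πC * Complex.I * τ) * n ^ 2 - 2 * πC * Complex.I * v * n) *
      jacobiθ τ v := by
  induction n using Int.induction_on with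
  | zero => simp
  | succ n ih =>
    have hv : v + (((n : ℤ) + 1 : ℤ) : ℂ) * τ = (v + (n : ℤ) * τ) + τ := by push_cast; ring
    rw [hv, theta_add_tau hτ, ih, zpow_add₀ (by norm_num : (-1 : ℂ) ≠ 0), zpow_one]
    rw [show (-Complex.exp (-(πC * Complex.I * τ) - 2 * πC * Complex.I * (v + (n : ℤ) * τ))) *
        ((-1 : ℂ) ^ (n : ℤ) *
          Complex.exp (-(πC * Complex.I * τ) * (n : ℤ) ^ 2 - 2 * πC * Complex.I * v * (n : ℤ)) *
          jacobiθ τ v) =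
      (-1 : ℂ) ^ (n : ℤ) * (-1) *
        (Complex.exp (-(πC * Complex.I * τ) - 2 * πC * Complex.I * (v + (n : ℤ) * τ)) *
          Complex.exp (-(πC * Complex.I * τ) * (n : ℤ) ^ 2 - 2 * πC * Complex.I * v * (n : ℤ))) *
        jacobiθ τ v by ring, ← Complex.exp_add]
    congr 2
    push_cast
    ring
  | pred n ih =>
    set N : ℤ := -(n : ℤ) with hN
    have hv : v + ((N - 1 : ℤ) : ℂ) * τ = (v + ((N : ℤ) : ℂ) * τ) - τ := by push_cast; ring
    rw [hv, theta_sub_tau hτ, ih]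
    have hsign : (-1 : ℂ) ^ (N - 1) = (-1 : ℂ) ^ N * (-1) := by
      rw [sub_eq_add_neg, zpow_add₀ (by norm_num : (-1 : ℂ) ≠ 0), zpow_neg_one]
      norm_num
    have hexp : Complex.exp (-(πC * Complex.I * τ) + 2 * πC * Complex.I *
        (v + ((N : ℤ) : ℂ) * τ)) *
        Complex.exp (-(πC * Complex.I * τ) * ((N : ℤ) : ℂ) ^ 2 -
          2 * πC * Complex.I * v * ((N : ℤ) : ℂ)) =
        Complex.exp (-(πC * Complex.I * τ) * ((N - 1 : ℤ) : ℂ) ^ 2 -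
          2 * πC * Complex.I * v * ((N - 1 : ℤ) : ℂ)) := by
      rw [← Complex.exp_add]
      congr 1
      push_cast
      ring
    rw [hsign]
    linear_combination (-(-1 : ℂ) ^ N * jacobiθ τ v) * hexp

lemma neg_one_zpow_sum {ι : Type*} (s : Finset ι) (c : ι → ℤ) :
    ∏ x ∈ s, (-1 : ℂ) ^ (c x) = (-1 : ℂ) ^ (∑ x ∈ s, c x) := by
  classical
  induction s using Finset.induction_on with
  | empty => simp
  | insert _ _ hx ih =>
    rw [Finset.prod_insert hx, Finset.sum_insert hx, ih,
      zpow_add₀ (by norm_num : (-1 : ℂ) ≠ 0)]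

lemma neg_one_zpow_congr {a b : ℤ} (h : (2 : ℤ) ∣ (a - b)) : (-1 : ℂ) ^ a = (-1 : ℂ) ^ b := by
  have he : Even (a - b) := even_iff_two_dvd.mpr h
  have : a = b + (a - b) := by ring
  rw [this, zpow_add₀ (by norm_num : (-1 : ℂ) ≠ 0), he.neg_one_zpow, mul_one]

lemma two_dvd_sq_sub (x : ℤ) : (2 : ℤ) ∣ x ^ 2 - x := by
  have h : Even ((x - 1) * (x - 1 + 1)) := Int.even_mul_succ_self (x - 1)
  obtain ⟨t, ht⟩ := h
  exact ⟨t, by nlinarith⟩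

lemma sum_update_eq {k : ℕ} (Q : Fin k → ℂ) (i : Fin k) (e : ℂ) (c : Fin k → ℤ) :
    ∑ j, (c j : ℂ) * (Function.update Q i (Q i + e) j) =
      (∑ j, (c j : ℂ) * Q j) + (c i : ℂ) * e := by
  have h : ∀ j, Function.update Q i (Q i + e) j = Q j + (if j = i then e else 0) := by
    intro j
    rcases eq_or_ne j i with h | h
    · subst h; simp
    · simp [Function.update_of_ne h, h]
  simp_rw [h, mul_add]
  rw [Finset.sum_add_distrib]
  congr 1
  rw [Finset.sum_eq_single i]
  · simp
  · intro b _ hb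
    simp [hb]
  · intro hi
    exact absurd (Finset.mem_univ i) hi

lemma prod_theta_one {ι : Type*} (τ : ℂ) (s : Finset ι) (V : ι → ℂ) (c : ι → ℤ) :
    ∏ l ∈ s, jacobiθ τ (V l + (c l : ℂ)) =
      (-1 : ℂ) ^ (∑ l ∈ s, c l) * ∏ l ∈ s, jacobiθ τ (V l) := by
  rw [← neg_one_zpow_sum, ← Finset.prod_mul_distrib]
  exact Finset.prod_congr rfl (fun l _ => theta_int τ (c l) (V l))

lemma prod_theta_tau {ι : Type*} {τ : ℂ} (hτ : 0 < τ.im) (s : Finset ι) (V : ι → ℂ)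
    (c : ι → ℤ) :
    ∏ l ∈ s, jacobiθ τ (V l + (c l : ℂ) * τ) =
      (-1 : ℂ) ^ (∑ l ∈ s, c l) *
        Complex.exp (∑ l ∈ s, (-(πC * Complex.I * τ) * (c l : ℂ) ^ 2 -
          2 * πC * Complex.I * (V l) * (c l : ℂ))) *
        ∏ l ∈ s, jacobiθ τ (V l) := by
  rw [← neg_one_zpow_sum, Complex.exp_sum, ← Finset.prod_mul_distrib, ← Finset.prod_mul_distrib]
  exact Finset.prod_congr rfl (fun l _ => theta_tau_int hτ (c l) (V l))

end WittenAux

open WittenAux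

/-- Ellipticity of
`F(q) = ∏_l θ(∑_j d_{lj}q_j) / (∏_{i'} θ(q_{i'}) · ∏_j θ(∑_t m_{jt}q_t))`
under the string conditions: `F` is invariant under `q_i ↦ q_i + 1` and
`q_i ↦ q_i + τ`, wherever the denominator is nonzero. -/
theorem ellipticity_of_witten_integrand (τ : ℂ) (hτ : 0 < τ.im)
    (k r s : ℕ) (hkr : k ≤ r)
    (d : Fin s → Fin k → ℤ) (m : Fin (r - k) → Fin k → ℤ) (i : Fin k)
    (hcross : ∀ v : Fin k, v ≠ i →
      (∑ l, d l i * d l v) - (∑ u, m u i * m u v) = 0)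
    (hsq : (∑ l, (d l i) ^ 2) - (∑ u, (m u i) ^ 2) - 1 = 0)
    (F : (Fin k → ℂ) → ℂ)
    (hF : ∀ Q : Fin k → ℂ,
      F Q = (∏ l, jacobiθ τ (∑ j, (d l j : ℂ) * Q j)) /
        ((∏ i' : Fin k, jacobiθ τ (Q i')) *
          ∏ j : Fin (r - k), jacobiθ τ (∑ t, (m j t : ℂ) * Q t)))
    (Q : Fin k → ℂ)
    (hden : (∏ i' : Fin k, jacobiθ τ (Q i')) *
        ∏ j : Fin (r - k), jacobiθ τ (∑ t, (m j t : ℂ) * Q t) ≠ 0)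
    (hden1 : (∏ i' : Fin k, jacobiθ τ (Function.update Q i (Q i + 1) i')) *
        ∏ j : Fin (r - k), jacobiθ τ (∑ t, (m j t : ℂ) * Function.update Q i (Q i + 1) t) ≠ 0)
    (hdenτ : (∏ i' : Fin k, jacobiθ τ (Function.update Q i (Q i + τ) i')) *
        ∏ j : Fin (r - k), jacobiθ τ (∑ t, (m j t : ℂ) * Function.update Q i (Q i + τ) t) ≠ 0) :
    F (Function.update Q i (Q i + 1)) = F Q ∧
    F (Function.update Q i (Q i + τ)) = F Q := by
  classical
  set V : Fin s → ℂ := fun l => ∑ j, (d l j : ℂ) * Q j with hV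
  set W : Fin (r - k) → ℂ := fun u => ∑ t, (m u t : ℂ) * Q t with hW
  set c0 : Fin k → ℤ := fun i' => if i' = i then 1 else 0 with hc0
  have hc0sum : ∑ i', c0 i' = 1 := by simp [hc0]
  have hmid : ∀ (e : ℂ) (i' : Fin k),
      Function.update Q i (Q i + e) i' = Q i' + (c0 i' : ℂ) * e := by
    intro e i'
    rcases eq_or_ne i' i with h | h
    · subst h; simp [hc0]
    · simp [Function.update_of_ne h, hc0, h]
  have hpar : (2 : ℤ) ∣ ((∑ l, d l i) - (1 + ∑ u, m u i)) := by
    have hd2 : (2 : ℤ) ∣ ∑ l, ((d l i) ^ 2 - d l i) :=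
      Finset.dvd_sum (fun l _ => two_dvd_sq_sub _)
    have hm2 : (2 : ℤ) ∣ ∑ u, ((m u i) ^ 2 - m u i) :=
      Finset.dvd_sum (fun u _ => two_dvd_sq_sub _)
    rw [Finset.sum_sub_distrib] at hd2 hm2
    omega
  have hsign : (-1 : ℂ) ^ (∑ l, d l i) = (-1 : ℂ) ^ ((1 : ℤ) + ∑ u, m u i) :=
    neg_one_zpow_congr (by
      have h : (∑ l, d l i) - ((1 : ℤ) + ∑ u, m u i) =
          (∑ l, d l i) - (1 + ∑ u, m u i) := by ring
      rw [h]; exact hpar)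
  constructor
  · -- shift by 1
    have hnum : (∏ l, jacobiθ τ (∑ j, (d l j : ℂ) * Function.update Q i (Q i + 1) j)) =
        (-1 : ℂ) ^ (∑ l, d l i) * ∏ l, jacobiθ τ (V l) :=
      calc (∏ l, jacobiθ τ (∑ j, (d l j : ℂ) * Function.update Q i (Q i + 1) j))
          = ∏ l, jacobiθ τ (V l + ((d l i : ℤ) : ℂ)) :=
            Finset.prod_congr rfl (fun l _ => by
              have h := sum_update_eq Q i 1 (d l)
              rw [mul_one] at h
              exact congrArg (jacobiθ τ) h)
        _ = (-1 : ℂ) ^ (∑ l, d l i) * ∏ l, jacobiθ τ (V l) :=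
            prod_theta_one τ Finset.univ V (fun l => d l i)
    have hDmid : (∏ i' : Fin k, jacobiθ τ (Function.update Q i (Q i + 1) i')) =
        (-1 : ℂ) ^ ((1 : ℤ)) * ∏ i' : Fin k, jacobiθ τ (Q i') := by
      rw [← hc0sum]
      calc (∏ i' : Fin k, jacobiθ τ (Function.update Q i (Q i + 1) i'))
          = ∏ i' : Fin k, jacobiθ τ (Q i' + ((c0 i' : ℤ) : ℂ)) :=
            Finset.prod_congr rfl (fun i' _ => by
              have h := hmid 1 i'
              rw [mul_one] at h
              exact congrArg (jacobiθ τ) h)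
        _ = (-1 : ℂ) ^ (∑ i', c0 i') * ∏ i' : Fin k, jacobiθ τ (Q i') :=
            prod_theta_one τ Finset.univ Q c0
    have hDm : (∏ u : Fin (r - k),
          jacobiθ τ (∑ t, (m u t : ℂ) * Function.update Q i (Q i + 1) t)) =
        (-1 : ℂ) ^ (∑ u, m u i) * ∏ u : Fin (r - k), jacobiθ τ (W u) :=
      calc (∏ u : Fin (r - k),
            jacobiθ τ (∑ t, (m u t : ℂ) * Function.update Q i (Q i + 1) t))
          = ∏ u : Fin (r - k), jacobiθ τ (W u + ((m u i : ℤ) : ℂ)) :=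
            Finset.prod_congr rfl (fun u _ => by
              have h := sum_update_eq Q i 1 (m u)
              rw [mul_one] at h
              exact congrArg (jacobiθ τ) h)
        _ = (-1 : ℂ) ^ (∑ u, m u i) * ∏ u : Fin (r - k), jacobiθ τ (W u) :=
            prod_theta_one τ Finset.univ W (fun u => m u i)
    have hDen : (∏ i' : Fin k, jacobiθ τ (Function.update Q i (Q i + 1) i')) *
        ∏ u : Fin (r - k), jacobiθ τ (∑ t, (m u t : ℂ) * Function.update Q i (Q i + 1) t) =
        (-1 : ℂ) ^ (∑ l, d l i) *
          ((∏ i' : Fin k, jacobiθ τ (Q i')) * ∏ u : Fin (r - k), jacobiθ τ (W u)) := by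
      rw [hDmid, hDm, hsign, zpow_add₀ (by norm_num : (-1 : ℂ) ≠ 0)]
      ring
    have hs : ((-1 : ℂ) ^ (∑ l, d l i)) ≠ 0 := by
      rw [hDen] at hden1
      exact left_ne_zero_of_mul hden1
    rw [hF, hF, hnum, hDen]
    exact mul_div_mul_left _ _ hs
  · -- shift by τ
    set EN : ℂ := ∑ l, (-(πC * Complex.I * τ) * ((d l i : ℤ) : ℂ) ^ 2 -
      2 * πC * Complex.I * (V l) * ((d l i : ℤ) : ℂ)) with hEN
    set EMid : ℂ := ∑ i', (-(πC * Complex.I * τ) * ((c0 i' : ℤ) : ℂ) ^ 2 -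
      2 * πC * Complex.I * (Q i') * ((c0 i' : ℤ) : ℂ)) with hEMid
    set EM : ℂ := ∑ u, (-(πC * Complex.I * τ) * ((m u i : ℤ) : ℂ) ^ 2 -
      2 * πC * Complex.I * (W u) * ((m u i : ℤ) : ℂ)) with hEM
    have hnum : (∏ l, jacobiθ τ (∑ j, (d l j : ℂ) * Function.update Q i (Q i + τ) j)) =
        (-1 : ℂ) ^ (∑ l, d l i) * Complex.exp EN * ∏ l, jacobiθ τ (V l) :=
      calc (∏ l, jacobiθ τ (∑ j, (d l j : ℂ) * Function.update Q i (Q i + τ) j))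
          = ∏ l, jacobiθ τ (V l + ((d l i : ℤ) : ℂ) * τ) :=
            Finset.prod_congr rfl (fun l _ =>
              congrArg (jacobiθ τ) (sum_update_eq Q i τ (d l)))
        _ = (-1 : ℂ) ^ (∑ l, d l i) * Complex.exp EN * ∏ l, jacobiθ τ (V l) :=
            prod_theta_tau hτ Finset.univ V (fun l => d l i)
    have hDmid : (∏ i' : Fin k, jacobiθ τ (Function.update Q i (Q i + τ) i')) =
        (-1 : ℂ) ^ ((1 : ℤ)) * Complex.exp EMid * ∏ i' : Fin k, jacobiθ τ (Q i') := by
      rw [← hc0sum]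
      calc (∏ i' : Fin k, jacobiθ τ (Function.update Q i (Q i + τ) i'))
          = ∏ i' : Fin k, jacobiθ τ (Q i' + ((c0 i' : ℤ) : ℂ) * τ) :=
            Finset.prod_congr rfl (fun i' _ => congrArg (jacobiθ τ) (hmid τ i'))
        _ = (-1 : ℂ) ^ (∑ i', c0 i') * Complex.exp EMid * ∏ i' : Fin k, jacobiθ τ (Q i') :=
            prod_theta_tau hτ Finset.univ Q c0
    have hDm : (∏ u : Fin (r - k),
          jacobiθ τ (∑ t, (m u t : ℂ) * Function.update Q i (Q i + τ) t)) =
        (-1 : ℂ) ^ (∑ u, m u i) * Complex.exp EM * ∏ u : Fin (r - k), jacobiθ τ (W u) :=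
      calc (∏ u : Fin (r - k),
            jacobiθ τ (∑ t, (m u t : ℂ) * Function.update Q i (Q i + τ) t))
          = ∏ u : Fin (r - k), jacobiθ τ (W u + ((m u i : ℤ) : ℂ) * τ) :=
            Finset.prod_congr rfl (fun u _ =>
              congrArg (jacobiθ τ) (sum_update_eq Q i τ (m u)))
        _ = (-1 : ℂ) ^ (∑ u, m u i) * Complex.exp EM * ∏ u : Fin (r - k), jacobiθ τ (W u) :=
            prod_theta_tau hτ Finset.univ W (fun u => m u i)
    -- scalar identities
    have hsqZ : (∑ l, (d l i) ^ 2) = 1 + ∑ u, (m u i) ^ 2 := by omega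
    have hsq' : (∑ l, ((d l i : ℤ) : ℂ) ^ 2) = 1 + ∑ u, ((m u i : ℤ) : ℂ) ^ 2 := by
      have h := congrArg (fun z : ℤ => (z : ℂ)) hsqZ
      push_cast at h
      exact h
    have hVW : (∑ l, (V l) * ((d l i : ℤ) : ℂ)) =
        Q i + ∑ u, (W u) * ((m u i : ℤ) : ℂ) := by
      have hA : (∑ l, (V l) * ((d l i : ℤ) : ℂ)) =
          ∑ v : Fin k, (((∑ l, d l i * d l v : ℤ) : ℂ)) * Q v := by
        simp_rw [hV, Finset.sum_mul]
        rw [Finset.sum_comm]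
        refine Finset.sum_congr rfl (fun v _ => ?_)
        push_cast
        rw [Finset.sum_mul]
        exact Finset.sum_congr rfl (fun l _ => by ring)
      have hB : (∑ u, (W u) * ((m u i : ℤ) : ℂ)) =
          ∑ v : Fin k, (((∑ u, m u i * m u v : ℤ) : ℂ)) * Q v := by
        simp_rw [hW, Finset.sum_mul]
        rw [Finset.sum_comm]
        refine Finset.sum_congr rfl (fun v _ => ?_)
        push_cast
        rw [Finset.sum_mul]
        exact Finset.sum_congr rfl (fun u _ => by ring)
      rw [hA, hB]
      have hkey : ∀ v : Fin k,
          (((∑ l, d l i * d l v : ℤ) : ℂ)) * Q v =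
            (((∑ u, m u i * m u v : ℤ) : ℂ)) * Q v + (if v = i then Q i else 0) := by
        intro v
        rcases eq_or_ne v i with h | h
        · have h2 : (∑ l, d l i * d l i) = (∑ u, m u i * m u i) + 1 := by
            have e1 : (∑ l, d l i * d l i) = ∑ l, (d l i) ^ 2 :=
              Finset.sum_congr rfl (fun l _ => (sq (d l i)).symm)
            have e2 : (∑ u, m u i * m u i) = ∑ u, (m u i) ^ 2 :=
              Finset.sum_congr rfl (fun u _ => (sq (m u i)).symm)
            omega
          rw [if_pos h, h, h2]
          push_cast
          ring
        · have h2 : (∑ l, d l i * d l v) = (∑ u, m u i * m u v) := by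
            have h3 := hcross v h
            omega
          rw [if_neg h, h2, add_zero]
      rw [Finset.sum_congr rfl (fun v _ => hkey v), Finset.sum_add_distrib]
      rw [Finset.sum_ite_eq' Finset.univ i (fun _ => Q i)]
      simp [add_comm]
    -- closed forms of exponents
    have hENc : EN = -(πC * Complex.I * τ) * (∑ l, ((d l i : ℤ) : ℂ) ^ 2) -
        2 * πC * Complex.I * (∑ l, (V l) * ((d l i : ℤ) : ℂ)) := by
      rw [hEN, Finset.sum_sub_distrib]
      congr 1
      · rw [← Finset.mul_sum]
      · rw [Finset.mul_sum]
        exact Finset.sum_congr rfl (fun l _ => by ring)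
    have hEMc : EM = -(πC * Complex.I * τ) * (∑ u, ((m u i : ℤ) : ℂ) ^ 2) -
        2 * πC * Complex.I * (∑ u, (W u) * ((m u i : ℤ) : ℂ)) := by
      rw [hEM, Finset.sum_sub_distrib]
      congr 1
      · rw [← Finset.mul_sum]
      · rw [Finset.mul_sum]
        exact Finset.sum_congr rfl (fun u _ => by ring)
    have hEMidc : EMid = -(πC * Complex.I * τ) - 2 * πC * Complex.I * (Q i) := by
      rw [hEMid, Finset.sum_eq_single i]
      · simp [hc0]
      · intro b _ hb
        simp [hc0, hb]
      · intro hi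
        exact absurd (Finset.mem_univ i) hi
    have hexp_eq : EN = EMid + EM := by
      rw [hENc, hEMc, hEMidc]
      linear_combination (-(πC * Complex.I * τ)) * hsq' - (2 * πC * Complex.I) * hVW
    have hDen : (∏ i' : Fin k, jacobiθ τ (Function.update Q i (Q i + τ) i')) *
        ∏ u : Fin (r - k), jacobiθ τ (∑ t, (m u t : ℂ) * Function.update Q i (Q i + τ) t) =
        (-1 : ℂ) ^ (∑ l, d l i) * Complex.exp EN *
          ((∏ i' : Fin k, jacobiθ τ (Q i')) * ∏ u : Fin (r - k), jacobiθ τ (W u)) := by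
      rw [hDmid, hDm, hsign, zpow_add₀ (by norm_num : (-1 : ℂ) ≠ 0), hexp_eq,
        Complex.exp_add]
      ring
    have hs : ((-1 : ℂ) ^ (∑ l, d l i) * Complex.exp EN) ≠ 0 := by
      rw [hDen] at hdenτ
      rw [show (-1 : ℂ) ^ (∑ l, d l i) * Complex.exp EN *
          ((∏ i' : Fin k, jacobiθ τ (Q i')) * ∏ u : Fin (r - k), jacobiθ τ (W u)) =
        ((-1 : ℂ) ^ (∑ l, d l i) * Complex.exp EN) *
          ((∏ i' : Fin k, jacobiθ τ (Q i')) * ∏ u : Fin (r - k), jacobiθ τ (W u)) from rfl]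
        at hdenτ
      exact left_ne_zero_of_mul hdenτ
    rw [hF, hF, hnum, hDen]
    exact mul_div_mul_left _ _ hs


end
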